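/- arXiv:2604.13525 — 2 statements merged into one kernel-verified Lean document; each statement's English description precedes it below -/
import Mathlib

section
/- Let w > 0, 0 < p < 1, and y ∈ ℝ. Define δ = (2w(1-p))^{1/(2-p)} + w p (2w(1-p))^{(p-1)/(2-p)}. If |y| ≤ δ, then x = 0 is a global minimizer of the function h(x) = w|x|^p + (1/2)(x - y)^2 over ℝ. -/
lemma stmt_2_key (w p : ℝ) (hw : 0 < w) (hp0 : 0 < p) (hp1 : p < 1) (t : ℝ) (ht : 0 ≤ t) :
    ((2*w*(1-p)) ^ ((1:ℝ)/(2-p)) + w*p*(2*w*(1-p)) ^ ((p-1)/(2-p))) * t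
      ≤ w * t ^ p + t^2/2 := by
  have hp2 : (0:ℝ) < 2 - p := by linarith
  have h1p : (0:ℝ) < 1 - p := by linarith
  have hs : (0:ℝ) < 2*w*(1-p) := by positivity
  set s := 2*w*(1-p) with hs_def
  set lam := (1:ℝ)/(2-p) with hlam_def
  set mu := (1-p)/(2-p) with hmu_def
  have hlam : 0 < lam := by positivity
  have hmu : 0 < mu := by positivity
  have hlm : lam + mu = 1 := by
    rw [hlam_def, hmu_def]; field_simp; ring
  set a := s ^ lam with ha_def
  have ha : 0 < a := Real.rpow_pos_of_pos hs _
  set R := (2-p)/(2*(1-p)) with hR_def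
  have hR : 0 < R := by positivity
  have hexp : (p-1)/(2-p) = lam - 1 := by
    rw [hlam_def]; field_simp; ring
  have h1 : s ^ ((p-1)/(2-p)) = a / s := by
    rw [hexp, Real.rpow_sub hs, Real.rpow_one, ha_def]
  have hδ' : s ^ lam + w*p*s ^ ((p-1)/(2-p)) = a * R := by
    rw [h1, ← ha_def, hR_def, hs_def]
    field_simp
    ring
  rw [hδ']
  rcases eq_or_lt_of_le ht with rfl | ht0
  · simp [Real.zero_rpow hp0.ne']
  · have hX : (0:ℝ) ≤ w*(2-p)*t^(p-1) := by positivity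
    have hY : (0:ℝ) ≤ t*R := by positivity
    have key := Real.geom_mean_le_arith_mean2_weighted hlam.le hmu.le hX hY hlm
    have hsR : w*(2-p) = s * R := by
      rw [hs_def, hR_def]; field_simp
    have h2 : (w*(2-p)*t^(p-1)) ^ lam = a * R^lam * t^((p-1)*lam) := by
      rw [hsR, show s*R*t^(p-1) = s*(R*t^(p-1)) by ring,
          Real.mul_rpow hs.le (by positivity),
          Real.mul_rpow hR.le (by positivity),
          ← Real.rpow_mul ht0.le, ha_def]
      ring
    have h3 : (t*R) ^ mu = t^mu * R^mu := Real.mul_rpow ht0.le hR.le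
    rw [h2, h3] at key
    have h4 : t^((p-1)*lam) * t^mu = 1 := by
      rw [← Real.rpow_add ht0]
      have : (p-1)*lam + mu = 0 := by
        rw [hlam_def, hmu_def]; field_simp; ring
      rw [this, Real.rpow_zero]
    have h5 : R^lam * R^mu = R := by
      rw [← Real.rpow_add hR, hlm, Real.rpow_one]
    have h6 : a * R^lam * t^((p-1)*lam) * (t^mu * R^mu) = a * R := by
      calc a * R^lam * t^((p-1)*lam) * (t^mu * R^mu)
          = a * ((t^((p-1)*lam) * t^mu) * (R^lam * R^mu)) := by ring
        _ = a * R := by rw [h4, h5, one_mul]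
    rw [h6] at key
    have h7 : lam*(w*(2-p)*t^(p-1)) + mu*(t*R) = w*t^(p-1) + t/2 := by
      rw [hlam_def, hmu_def, hR_def]; field_simp
    rw [h7] at key
    have h8 : t ^ p = t ^ (p-1) * t := by
      have h := Real.rpow_add ht0 (p-1) 1
      rw [Real.rpow_one] at h
      rw [← h]; norm_num
    have h9 : a*R*t ≤ (w*t^(p-1) + t/2)*t := mul_le_mul_of_nonneg_right key ht
    nlinarith [h9, h8]

theorem stmt_2 (w p y : ℝ) (hw : 0 < w) (hp0 : 0 < p) (hp1 : p < 1)
    (δ : ℝ)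
    (hδ : δ = (2*w*(1-p)) ^ ((1:ℝ)/(2-p)) + w*p*(2*w*(1-p)) ^ ((p-1)/(2-p)))
    (hy : |y| ≤ δ) :
    ∀ x : ℝ, w * |(0:ℝ)| ^ p + (1/2) * ((0:ℝ) - y)^2 ≤ w * |x| ^ p + (1/2) * (x - y)^2 := by
  intro x
  have h0 : |(0:ℝ)| ^ p = 0 := by
    simp [Real.zero_rpow hp0.ne']
  have hxy : x*y ≤ |x| * δ := by
    calc x*y ≤ |x*y| := le_abs_self _
      _ = |x| * |y| := abs_mul x y
      _ ≤ |x| * δ := mul_le_mul_of_nonneg_left hy (abs_nonneg x)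
  have hkey := stmt_2_key w p hw hp0 hp1 |x| (abs_nonneg x)
  rw [← hδ] at hkey
  rw [h0]
  nlinarith [hkey, hxy, sq_abs x]
end

section
/- Let w > 0, 0 < p < 1, and y > δ where δ = (2w(1-p))^{1/(2-p)} + wp(2w(1-p))^{(p-1)/(2-p)}. Then there exists x* > 0 satisfying the stationarity equation x* - y + w p (x*)^{p-1} = 0. -/
theorem stmt_3 (w p y : ℝ) (hw : 0 < w) (hp0 : 0 < p) (hp1 : p < 1)
    (δ : ℝ)
    (hδ : δ = (2*w*(1-p)) ^ ((1:ℝ)/(2-p)) + w*p*(2*w*(1-p)) ^ ((p-1)/(2-p)))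
    (hy : δ < y) :
    ∃ x : ℝ, 0 < x ∧ x - y + w * p * x ^ (p-1) = 0 := by
  set A : ℝ := 2*w*(1-p) with hA
  have hApos : 0 < A := by nlinarith
  set x0 : ℝ := A ^ ((1:ℝ)/(2-p)) with hx0
  have hx0pos : 0 < x0 := Real.rpow_pos_of_pos hApos _
  have h2p : (2:ℝ) - p ≠ 0 := by nlinarith
  have hx0pow : x0 ^ (p-1) = A ^ ((p-1)/(2-p)) := by
    rw [hx0, ← Real.rpow_mul hApos.le]
    congr 1
    field_simp
  have hδeq : δ = x0 + w * p * x0 ^ (p-1) := by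
    rw [hδ, hx0pow]
  have hwp : 0 < w * p := by positivity
  have hx0ltδ : x0 < δ := by
    rw [hδeq]
    nlinarith [Real.rpow_pos_of_pos hx0pos (p-1)]
  have hypos : 0 < y := lt_trans hx0pos (lt_trans hx0ltδ hy)
  set f : ℝ → ℝ := fun x => x - y + w * p * x ^ (p-1) with hf
  have hcont : ContinuousOn f (Set.Icc x0 y) := by
    apply ContinuousOn.add
    · exact (continuousOn_id.sub continuousOn_const)
    · apply ContinuousOn.mul continuousOn_const
      apply ContinuousOn.rpow_const continuousOn_id
      intro x hx
      exact Or.inl (ne_of_gt (lt_of_lt_of_le hx0pos hx.1))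
  have hle : x0 ≤ y := le_of_lt (lt_trans hx0ltδ hy)
  have hfx0 : f x0 < 0 := by
    have h2 : x0 + w * p * x0 ^ (p-1) < y := hδeq ▸ hy
    simp only [hf]
    linarith
  have hfy : 0 < f y := by
    simp only [hf]
    have := Real.rpow_pos_of_pos hypos (p-1)
    nlinarith
  have h0 : (0:ℝ) ∈ Set.Icc (f x0) (f y) := ⟨le_of_lt hfx0, le_of_lt hfy⟩
  obtain ⟨x, hxmem, hfx⟩ := intermediate_value_Icc hle hcont h0
  exact ⟨x, lt_of_lt_of_le hx0pos hxmem.1, hfx⟩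
end
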